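/- Let f : ℝⁿ → ℝⁿ be measurable and locally bounded, and let F be its Filippov regularization, defined by F(r) = ⋂_{δ>0} ⋂_{N : m(N)=0} closure(convexHull(f(B_δ(r) \ N))), where m is Lebesgue measure and B_δ(r) the open ball of radius δ about r. Then at every point r₀ where f is continuous, F(r₀) = {f(r₀)}. -/

import Mathlib

open MeasureTheory

theorem stmt_0 {n : ℕ} (f : (Fin n → ℝ) → (Fin n → ℝ))
    (hf : Measurable f)
    (hloc : ∀ r : Fin n → ℝ, ∃ δ > 0, ∃ M : ℝ, ∀ x ∈ Metric.ball r δ, ‖f x‖ ≤ M)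
    (r₀ : Fin n → ℝ) (hcont : ContinuousAt f r₀) :
    (⋂ δ ∈ Set.Ioi (0:ℝ), ⋂ N ∈ {N : Set (Fin n → ℝ) | volume N = 0},
      closure (convexHull ℝ (f '' (Metric.ball r₀ δ \ N)))) = {f r₀} := by
  apply Set.eq_singleton_iff_unique_mem.mpr
  constructor
  · -- f r₀ belongs to every set in the intersection
    simp only [Set.mem_iInter, Set.mem_Ioi, Set.mem_setOf_eq]
    intro δ hδ N hN
    refine closure_mono (subset_convexHull ℝ _) ?_
    rw [Metric.mem_closure_iff]
    intro ε hε
    rcases Metric.continuousAt_iff.mp hcont ε hε with ⟨δ', hδ', hball⟩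
    have hpos : (0:ℝ) < min δ δ' := lt_min hδ hδ'
    have hvol : volume (Metric.ball r₀ (min δ δ')) ≠ 0 :=
      (Metric.measure_ball_pos volume r₀ hpos).ne'
    have hne : (Metric.ball r₀ (min δ δ') \ N).Nonempty := by
      rw [Set.nonempty_iff_ne_empty]
      intro h
      have hsub : Metric.ball r₀ (min δ δ') ⊆ N := by
        intro x hx
        by_contra hxN
        exact Set.eq_empty_iff_forall_notMem.mp h x ⟨hx, hxN⟩
      exact hvol (le_antisymm ((measure_mono hsub).trans_eq hN) zero_le)
    obtain ⟨x, hx⟩ := hne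
    refine ⟨f x, ⟨x, ⟨?_, hx.2⟩, rfl⟩, ?_⟩
    · exact Metric.ball_subset_ball (min_le_left _ _) hx.1
    · rw [dist_comm]
      exact hball (lt_of_lt_of_le (Metric.mem_ball.mp hx.1) (min_le_right _ _))
  · -- uniqueness
    intro y hy
    simp only [Set.mem_iInter, Set.mem_Ioi, Set.mem_setOf_eq] at hy
    refine eq_of_forall_dist_le fun ε hε => ?_
    rcases Metric.continuousAt_iff.mp hcont ε hε with ⟨δ, hδ, hball⟩
    have hyδ := hy δ hδ ∅ (measure_empty)
    have hsub : f '' (Metric.ball r₀ δ \ ∅) ⊆ Metric.closedBall (f r₀) ε := by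
      rintro _ ⟨x, ⟨hx, -⟩, rfl⟩
      exact Metric.mem_closedBall.mpr (le_of_lt (hball (Metric.mem_ball.mp hx)))
    have h1 : closure (convexHull ℝ (f '' (Metric.ball r₀ δ \ ∅))) ⊆
        Metric.closedBall (f r₀) ε := by
      refine closure_minimal ?_ Metric.isClosed_closedBall
      exact convexHull_min hsub (convex_closedBall _ _)
    exact Metric.mem_closedBall.mp (h1 hyδ)
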